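/- arXiv:1906.01519 — 5 statements merged into one kernel-verified Lean document; each statement's English description precedes it below -/
import Mathlib

section
/- Given a distributive law λ : TF ⇒ FT of a monad T over an endofunctor F, if (Ω, ω) is a final F-coalgebra, then Ω carries an Eilenberg–Moore T-algebra structure α : TΩ → Ω, defined as the unique coalgebra morphism from the F-coalgebra (TΩ, Fα' where α' = λ_Ω ∘ Tω) to (Ω, ω), and (Ω, α, ω) is a λ-bialgebra. -/
open CategoryTheory

/-- Given a distributive law `λ : TF ⇒ FT` of a monad `T` over an endofunctor `F`
and a final `F`-coalgebra `(Ω, ω)`, the object `Ω` carries an Eilenberg–Moore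
`T`-algebra structure `α`, namely the unique coalgebra morphism from the
`F`-coalgebra `(TΩ, λ_Ω ∘ Tω)` to `(Ω, ω)`, and `(Ω, α, ω)` is a `λ`-bialgebra. -/
theorem final_coalgebra_carries_EM_algebra
    {C : Type*} [Category C] (T : Monad C) (F : C ⥤ C)
    (lam : F ⋙ T.toFunctor ⟶ T.toFunctor ⋙ F)
    (hunit : ∀ X : C, T.η.app (F.obj X) ≫ lam.app X = F.map (T.η.app X))
    (hmul : ∀ X : C, T.μ.app (F.obj X) ≫ lam.app X =
      T.toFunctor.map (lam.app X) ≫ lam.app (T.toFunctor.obj X) ≫ F.map (T.μ.app X))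
    (Ω : C) (ω : Ω ⟶ F.obj Ω)
    (hfinal : ∀ (Y : C) (b : Y ⟶ F.obj Y), ∃! h : Y ⟶ Ω, b ≫ F.map h = h ≫ ω) :
    ∃ α : T.toFunctor.obj Ω ⟶ Ω,
      ((T.toFunctor.map ω ≫ lam.app Ω) ≫ F.map α = α ≫ ω) ∧
      (T.η.app Ω ≫ α = 𝟙 Ω) ∧
      (T.μ.app Ω ≫ α = T.toFunctor.map α ≫ α) := by
  set b : T.toFunctor.obj Ω ⟶ F.obj (T.toFunctor.obj Ω) :=
    T.toFunctor.map ω ≫ lam.app Ω with hb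
  obtain ⟨α, hα, -⟩ := hfinal _ b
  refine ⟨α, hα, ?_, ?_⟩
  · -- unit law via uniqueness of coalgebra morphisms (Ω, ω) ⟶ (Ω, ω)
    obtain ⟨h, -, huniq⟩ := hfinal Ω ω
    have h1 : ω ≫ F.map (T.η.app Ω ≫ α) = (T.η.app Ω ≫ α) ≫ ω := by
      have nat : T.η.app Ω ≫ T.toFunctor.map ω = ω ≫ T.η.app (F.obj Ω) :=
        (T.η.naturality ω).symm
      calc ω ≫ F.map (T.η.app Ω ≫ α)
          = (ω ≫ F.map (T.η.app Ω)) ≫ F.map α := by simp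
        _ = (T.η.app Ω ≫ b) ≫ F.map α := by
            rw [hb, ← hunit Ω, ← Category.assoc, ← nat]; simp
        _ = T.η.app Ω ≫ α ≫ ω := by rw [Category.assoc, hα]
        _ = (T.η.app Ω ≫ α) ≫ ω := by simp
    have h2 : ω ≫ F.map (𝟙 Ω) = 𝟙 Ω ≫ ω := by simp
    exact (huniq _ h1).trans (huniq _ h2).symm
  · -- multiplication law via uniqueness from (T²Ω, T b ≫ λ_{TΩ})
    set c : T.toFunctor.obj (T.toFunctor.obj Ω) ⟶ _ :=
      T.toFunctor.map b ≫ lam.app (T.toFunctor.obj Ω) with hc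
    obtain ⟨h, -, huniq⟩ := hfinal _ c
    have h1 : c ≫ F.map (T.μ.app Ω ≫ α) = (T.μ.app Ω ≫ α) ≫ ω := by
      have natμ : T.toFunctor.map (T.toFunctor.map ω) ≫ T.μ.app (F.obj Ω)
          = T.μ.app Ω ≫ T.toFunctor.map ω := T.μ.naturality ω
      calc c ≫ F.map (T.μ.app Ω ≫ α)
          = T.toFunctor.map (T.toFunctor.map ω) ≫ T.toFunctor.map (lam.app Ω) ≫
              lam.app (T.toFunctor.obj Ω) ≫ F.map (T.μ.app Ω) ≫ F.map α := by
            simp [hc, hb]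
        _ = T.toFunctor.map (T.toFunctor.map ω) ≫
              (T.μ.app (F.obj Ω) ≫ lam.app Ω) ≫ F.map α := by
            rw [hmul Ω]; simp
        _ = T.μ.app Ω ≫ (T.toFunctor.map ω ≫ lam.app Ω) ≫ F.map α := by
            rw [← Category.assoc, ← Category.assoc, natμ]; simp
        _ = (T.μ.app Ω ≫ α) ≫ ω := by rw [← hb, hα]; simp
    have h2 : c ≫ F.map (T.toFunctor.map α ≫ α) = (T.toFunctor.map α ≫ α) ≫ ω := by
      have natlam : T.toFunctor.map (F.map α) ≫ lam.app Ω
          = lam.app (T.toFunctor.obj Ω) ≫ F.map (T.toFunctor.map α) := lam.naturality α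
      calc c ≫ F.map (T.toFunctor.map α ≫ α)
          = T.toFunctor.map b ≫
              (lam.app (T.toFunctor.obj Ω) ≫ F.map (T.toFunctor.map α)) ≫ F.map α := by
            simp [hc]
        _ = (T.toFunctor.map b ≫ T.toFunctor.map (F.map α) ≫ lam.app Ω) ≫ F.map α := by
            rw [natlam]; simp
        _ = T.toFunctor.map (b ≫ F.map α) ≫ lam.app Ω ≫ F.map α := by simp
        _ = T.toFunctor.map (α ≫ ω) ≫ lam.app Ω ≫ F.map α := by rw [hα]
        _ = T.toFunctor.map α ≫ b ≫ F.map α := by simp [hb]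
        _ = (T.toFunctor.map α ≫ α) ≫ ω := by rw [hα]; simp
    exact (huniq _ h1).trans (huniq _ h2).symm
end

section
/- If λ : TF ⇒ FT is a distributive law of a monad T over an endofunctor F, then the unique morphism from any λ-bialgebra (TX, μ_X, β♯) to the final λ-bialgebra on the final F-coalgebra Ω is simultaneously a T-algebra homomorphism and an F-coalgebra homomorphism; hence the behaviour map ⟦·⟧ : TX → Ω is compositional, i.e., ⟦·⟧ ∘ μ_X = α_Ω ∘ T⟦·⟧ where α_Ω is the induced algebra structure on Ω. -/
open CategoryTheory

/-- Bialgebraic compositionality: given a distributive law `λ : TF ⇒ FT`, a final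
`F`-coalgebra `(Ω, ω)` with induced algebra `α_Ω` (the unique coalgebra morphism
`TΩ ⟶ Ω`), a coalgebra `β : X ⟶ FTX` with lifting `β♯ := Fμ ∘ λ_{TX} ∘ Tβ`, and the
unique coalgebra morphism `⟦·⟧ : (TX, β♯) ⟶ (Ω, ω)`, the behaviour map `⟦·⟧` is a
`T`-algebra homomorphism: `⟦·⟧ ∘ μ_X = α_Ω ∘ T⟦·⟧`. -/
theorem bialgebraic_semantics_compositional
    {C : Type*} [Category C] (T : Monad C) (F : C ⥤ C)
    (lam : F ⋙ T.toFunctor ⟶ T.toFunctor ⋙ F)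
    (hunit : ∀ X : C, T.η.app (F.obj X) ≫ lam.app X = F.map (T.η.app X))
    (hmul : ∀ X : C, T.μ.app (F.obj X) ≫ lam.app X =
      T.toFunctor.map (lam.app X) ≫ lam.app (T.toFunctor.obj X) ≫ F.map (T.μ.app X))
    (Ω : C) (ω : Ω ⟶ F.obj Ω)
    (hfinal : ∀ (Y : C) (b : Y ⟶ F.obj Y), ∃! h : Y ⟶ Ω, b ≫ F.map h = h ≫ ω)
    (αΩ : T.toFunctor.obj Ω ⟶ Ω)
    (hαΩ : (T.toFunctor.map ω ≫ lam.app Ω) ≫ F.map αΩ = αΩ ≫ ω)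
    (X : C) (β : X ⟶ F.obj (T.toFunctor.obj X))
    (sem : T.toFunctor.obj X ⟶ Ω)
    (hsem : (T.toFunctor.map β ≫ lam.app (T.toFunctor.obj X) ≫ F.map (T.μ.app X)) ≫
        F.map sem = sem ≫ ω) :
    T.μ.app X ≫ sem = T.toFunctor.map sem ≫ αΩ := by
  have Tf : C ⥤ C := T.toFunctor
  -- the lifted coalgebra on TX
  let TX : C := T.toFunctor.obj X
  let βs : TX ⟶ F.obj TX := T.toFunctor.map β ≫ lam.app TX ≫ F.map (T.μ.app X)
  have hβs : βs = T.toFunctor.map β ≫ lam.app TX ≫ F.map (T.μ.app X) := rfl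
  -- coalgebra structure on T(TX)
  let c : T.toFunctor.obj TX ⟶ F.obj (T.toFunctor.obj TX) :=
    T.toFunctor.map βs ≫ lam.app TX
  have hc : c = T.toFunctor.map βs ≫ lam.app TX := rfl
  obtain ⟨h, -, huniq⟩ := hfinal (T.toFunctor.obj TX) c
  have hsem' : βs ≫ F.map sem = sem ≫ ω := by
    rw [hβs]; simpa using hsem
  -- μ_X ≫ sem is a coalgebra morphism (TTX, c) → (Ω, ω)
  have h1 : c ≫ F.map (T.μ.app X ≫ sem) = (T.μ.app X ≫ sem) ≫ ω := by
    have hmorβ : c ≫ F.map (T.μ.app X) = T.μ.app X ≫ βs := by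
      have hnatμ : T.toFunctor.map (F.map (T.μ.app X)) ≫ lam.app TX
          = lam.app (T.toFunctor.obj TX) ≫ F.map (T.toFunctor.map (T.μ.app X)) :=
        lam.naturality (T.μ.app X)
      have hnatβ : T.μ.app X ≫ T.toFunctor.map β
          = T.toFunctor.map (T.toFunctor.map β) ≫ T.μ.app (F.obj TX) :=
        (T.μ.naturality β).symm
      have hassoc : T.toFunctor.map (T.μ.app X) ≫ T.μ.app X = T.μ.app TX ≫ T.μ.app X := by
        simpa using T.assoc X
      calc c ≫ F.map (T.μ.app X)
          = T.toFunctor.map (T.toFunctor.map β) ≫ T.toFunctor.map (lam.app TX) ≫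
              (T.toFunctor.map (F.map (T.μ.app X)) ≫ lam.app TX) ≫ F.map (T.μ.app X) := by
            simp [hc, hβs, T.toFunctor.map_comp]
        _ = T.toFunctor.map (T.toFunctor.map β) ≫ T.toFunctor.map (lam.app TX) ≫
              lam.app (T.toFunctor.obj TX) ≫
              F.map (T.toFunctor.map (T.μ.app X) ≫ T.μ.app X) := by
            rw [hnatμ]; simp [F.map_comp]
        _ = T.toFunctor.map (T.toFunctor.map β) ≫ T.toFunctor.map (lam.app TX) ≫
              lam.app (T.toFunctor.obj TX) ≫ F.map (T.μ.app TX ≫ T.μ.app X) := by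
            rw [hassoc]
        _ = T.toFunctor.map (T.toFunctor.map β) ≫
              (T.μ.app (F.obj TX) ≫ lam.app TX) ≫ F.map (T.μ.app X) := by
            rw [hmul TX]; simp [F.map_comp]
        _ = (T.μ.app X ≫ T.toFunctor.map β) ≫ lam.app TX ≫ F.map (T.μ.app X) := by
            rw [hnatβ]; simp
        _ = T.μ.app X ≫ βs := by simp [hβs]
    calc c ≫ F.map (T.μ.app X ≫ sem)
        = (c ≫ F.map (T.μ.app X)) ≫ F.map sem := by simp [F.map_comp]
      _ = T.μ.app X ≫ βs ≫ F.map sem := by rw [hmorβ]; simp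
      _ = T.μ.app X ≫ sem ≫ ω := by rw [hsem']
      _ = (T.μ.app X ≫ sem) ≫ ω := by simp
  -- T sem ≫ αΩ is a coalgebra morphism (TTX, c) → (Ω, ω)
  have h2 : c ≫ F.map (T.toFunctor.map sem ≫ αΩ) = (T.toFunctor.map sem ≫ αΩ) ≫ ω := by
    have hnat : T.toFunctor.map (F.map sem) ≫ lam.app Ω
        = lam.app TX ≫ F.map (T.toFunctor.map sem) := lam.naturality sem
    calc c ≫ F.map (T.toFunctor.map sem ≫ αΩ)
        = T.toFunctor.map βs ≫ (lam.app TX ≫ F.map (T.toFunctor.map sem)) ≫ F.map αΩ := by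
          simp [hc, F.map_comp]
      _ = T.toFunctor.map βs ≫ T.toFunctor.map (F.map sem) ≫ lam.app Ω ≫ F.map αΩ := by
          rw [← hnat]; simp
      _ = T.toFunctor.map (βs ≫ F.map sem) ≫ lam.app Ω ≫ F.map αΩ := by
          simp [T.toFunctor.map_comp]
      _ = T.toFunctor.map (sem ≫ ω) ≫ lam.app Ω ≫ F.map αΩ := by rw [hsem']
      _ = T.toFunctor.map sem ≫ (T.toFunctor.map ω ≫ lam.app Ω) ≫ F.map αΩ := by
          simp [T.toFunctor.map_comp]
      _ = (T.toFunctor.map sem ≫ αΩ) ≫ ω := by rw [hαΩ]; simp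
  rw [huniq _ h1, huniq _ h2]
end

section
/- For an endofunctor F on a category C with binary coproducts such that for every object X an initial (X + F)-algebra F†X exists, the assignment X ↦ F†X extends to a monad (F†, η, μ), where η_X : X → F†X is the first component of the initial algebra structure [η_X, κ_X] : X + F(F†X) → F†X, and μ_X is the unique (F†X + F)-algebra morphism from the initial one to (F†X, [id, κ_X]). -/
open CategoryTheory

/-- The free monad on an endofunctor. If for each object `X` there is an initial
`(X + F)`-algebra `(F†X, [η_X, κ_X])` (expressed here via its universal property),
then `X ↦ F†X` extends to a monad: there is a functorial action on morphisms and a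
multiplication `μ` (the unique algebra morphism from the initial `(F†X + F)`-algebra
to `(F†X, [id, κ_X])`) satisfying the monad laws with unit `η`. -/
theorem free_monad_of_initial_algebras
    {C : Type*} [Category C] (F : C ⥤ C)
    (Fd : C → C) (η : ∀ X : C, X ⟶ Fd X) (κ : ∀ X : C, F.obj (Fd X) ⟶ Fd X)
    (hinit : ∀ (X A : C) (a : X ⟶ A) (k : F.obj A ⟶ A),
      ∃! h : Fd X ⟶ A, η X ≫ h = a ∧ κ X ≫ h = F.map h ≫ k) :
    ∃ (map : ∀ X Y : C, (X ⟶ Y) → (Fd X ⟶ Fd Y)) (μ : ∀ X : C, Fd (Fd X) ⟶ Fd X),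
      -- defining property of the functorial action (naturality of η and κ)
      (∀ (X Y : C) (f : X ⟶ Y),
        η X ≫ map X Y f = f ≫ η Y ∧ κ X ≫ map X Y f = F.map (map X Y f) ≫ κ Y) ∧
      -- defining property of μ: the unique algebra morphism to (F†X, [id, κ_X])
      (∀ X : C, η (Fd X) ≫ μ X = 𝟙 (Fd X) ∧ κ (Fd X) ≫ μ X = F.map (μ X) ≫ κ X) ∧
      -- functoriality
      (∀ X : C, map X X (𝟙 X) = 𝟙 (Fd X)) ∧
      (∀ (X Y Z : C) (f : X ⟶ Y) (g : Y ⟶ Z),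
        map X Z (f ≫ g) = map X Y f ≫ map Y Z g) ∧
      -- naturality of μ
      (∀ (X Y : C) (f : X ⟶ Y),
        map (Fd X) (Fd Y) (map X Y f) ≫ μ Y = μ X ≫ map X Y f) ∧
      -- monad unit laws and associativity
      (∀ X : C, map X (Fd X) (η X) ≫ μ X = 𝟙 (Fd X)) ∧
      (∀ X : C, η (Fd X) ≫ μ X = 𝟙 (Fd X)) ∧
      (∀ X : C, map (Fd (Fd X)) (Fd X) (μ X) ≫ μ X = μ (Fd X) ≫ μ X) := by

  have uniq : ∀ (X A : C) (a : X ⟶ A) (k : F.obj A ⟶ A) (h₁ h₂ : Fd X ⟶ A),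
      (η X ≫ h₁ = a ∧ κ X ≫ h₁ = F.map h₁ ≫ k) →
      (η X ≫ h₂ = a ∧ κ X ≫ h₂ = F.map h₂ ≫ k) → h₁ = h₂ := by
    intro X A a k h₁ h₂ p₁ p₂
    obtain ⟨h, -, hu⟩ := hinit X A a k
    rw [hu h₁ p₁, hu h₂ p₂]
  choose map hmap _ using fun X Y (f : X ⟶ Y) => hinit X (Fd Y) (f ≫ η Y) (κ Y)
  choose μ hμ _ using fun X => hinit (Fd X) (Fd X) (𝟙 (Fd X)) (κ X)
  have hmap1 : ∀ (X Y : C) (f : X ⟶ Y), η X ≫ map X Y f = f ≫ η Y := fun X Y f => (hmap X Y f).1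
  have hmap2 : ∀ (X Y : C) (f : X ⟶ Y), κ X ≫ map X Y f = F.map (map X Y f) ≫ κ Y :=
    fun X Y f => (hmap X Y f).2
  have hμ1 : ∀ X : C, η (Fd X) ≫ μ X = 𝟙 (Fd X) := fun X => (hμ X).1
  have hμ2 : ∀ X : C, κ (Fd X) ≫ μ X = F.map (μ X) ≫ κ X := fun X => (hμ X).2
  refine ⟨map, μ, hmap, hμ, ?_, ?_, ?_, ?_, hμ1, ?_⟩
  · intro X
    exact uniq X (Fd X) (𝟙 X ≫ η X) (κ X) _ _ ⟨hmap1 X X (𝟙 X), hmap2 X X (𝟙 X)⟩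
      ⟨by simp, by simp⟩
  · intro X Y Z f g
    refine uniq X (Fd Z) ((f ≫ g) ≫ η Z) (κ Z) _ _ (hmap X Z (f ≫ g)) ⟨?_, ?_⟩
    · rw [← Category.assoc, hmap1 X Y f, Category.assoc, hmap1 Y Z g, Category.assoc]
    · rw [← Category.assoc, hmap2 X Y f, Category.assoc, hmap2 Y Z g, F.map_comp,
        Category.assoc]
  · intro X Y f
    refine uniq (Fd X) (Fd Y) (map X Y f) (κ Y) _ _ ⟨?_, ?_⟩ ⟨?_, ?_⟩
    · rw [← Category.assoc, hmap1, Category.assoc, hμ1, Category.comp_id]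
    · rw [← Category.assoc, hmap2, Category.assoc, hμ2, F.map_comp, Category.assoc]
    · rw [← Category.assoc, hμ1, Category.id_comp]
    · rw [← Category.assoc, hμ2, Category.assoc, hmap2, F.map_comp, Category.assoc]
  · intro X
    refine uniq X (Fd X) (η X) (κ X) _ _ ⟨?_, ?_⟩ ⟨by simp, by simp⟩
    · rw [← Category.assoc, hmap1, Category.assoc, hμ1, Category.comp_id]
    · rw [← Category.assoc, hmap2, Category.assoc, hμ2, F.map_comp, Category.assoc]
  · intro X
    refine uniq (Fd (Fd X)) (Fd X) (μ X) (κ X) _ _ ⟨?_, ?_⟩ ⟨?_, ?_⟩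
    · rw [← Category.assoc, hmap1, Category.assoc, hμ1, Category.comp_id]
    · rw [← Category.assoc, hmap2, Category.assoc, hμ2, F.map_comp, Category.assoc]
    · rw [← Category.assoc, hμ1, Category.id_comp]
    · rw [← Category.assoc, hμ2, Category.assoc, hμ2, F.map_comp, Category.assoc]
end

section
/- Given GSOS specifications λ₁ : S₁F ⇒ F S₁† and λ₂ : S₂F ⇒ F S₂† for endofunctors S₁, S₂, F on a category with coproducts and free monads, there is a GSOS specification λ₁·λ₂ : (S₁+S₂)F ⇒ F(S₁+S₂)†, obtained via the canonical monad morphisms γᵢ : Sᵢ† ⇒ (S₁+S₂)† (induced by initiality of free-monad algebras) and the copairing of Fγ₁ ∘ λ₁ and Fγ₂ ∘ λ₂. -/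
open CategoryTheory

/-- Coproduct of GSOS specifications. Given syntax functors `S1`, `S2` with free
monads `T1`, `T2` (expressed via the universal property of initial `(X + Sᵢ)`-algebras),
a functor `S12` which is objectwise the coproduct `S1 + S2` with injections `i1`, `i2`,
its free monad `T12`, and GSOS specifications `lam1 : S1 F ⇒ F T1`, `lam2 : S2 F ⇒ F T2`,
there is a GSOS specification `lam : S12 F ⇒ F T12` obtained, via the canonical
monad morphisms `γᵢ : Tᵢ ⇒ T12` induced by initiality, as the copairing of
`F γ1 ∘ lam1` and `F γ2 ∘ lam2`. -/
theorem coproduct_of_GSOS_specifications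
    {C : Type*} [Category C]
    (S1 S2 S12 F T1 T2 T12 : C ⥤ C)
    (i1 : S1 ⟶ S12) (i2 : S2 ⟶ S12)
    (hcoprod : ∀ (X A : C) (f : S1.obj X ⟶ A) (g : S2.obj X ⟶ A),
      ∃! h : S12.obj X ⟶ A, i1.app X ≫ h = f ∧ i2.app X ≫ h = g)
    (η1 : 𝟭 C ⟶ T1) (κ1 : T1 ⋙ S1 ⟶ T1)
    (η2 : 𝟭 C ⟶ T2) (κ2 : T2 ⋙ S2 ⟶ T2)
    (η12 : 𝟭 C ⟶ T12) (κ12 : T12 ⋙ S12 ⟶ T12)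
    (hinit1 : ∀ (X A : C) (a : X ⟶ A) (k : S1.obj A ⟶ A),
      ∃! h : T1.obj X ⟶ A, η1.app X ≫ h = a ∧ κ1.app X ≫ h = S1.map h ≫ k)
    (hinit2 : ∀ (X A : C) (a : X ⟶ A) (k : S2.obj A ⟶ A),
      ∃! h : T2.obj X ⟶ A, η2.app X ≫ h = a ∧ κ2.app X ≫ h = S2.map h ≫ k)
    (hinit12 : ∀ (X A : C) (a : X ⟶ A) (k : S12.obj A ⟶ A),
      ∃! h : T12.obj X ⟶ A, η12.app X ≫ h = a ∧ κ12.app X ≫ h = S12.map h ≫ k)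
    (lam1 : F ⋙ S1 ⟶ T1 ⋙ F) (lam2 : F ⋙ S2 ⟶ T2 ⋙ F) :
    ∃ (γ1 : ∀ X : C, T1.obj X ⟶ T12.obj X) (γ2 : ∀ X : C, T2.obj X ⟶ T12.obj X)
      (lam : F ⋙ S12 ⟶ T12 ⋙ F),
      -- γ1, γ2 are the canonical maps induced by initiality
      (∀ X : C, η1.app X ≫ γ1 X = η12.app X ∧
        κ1.app X ≫ γ1 X = S1.map (γ1 X) ≫ (i1.app (T12.obj X) ≫ κ12.app X)) ∧
      (∀ X : C, η2.app X ≫ γ2 X = η12.app X ∧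
        κ2.app X ≫ γ2 X = S2.map (γ2 X) ≫ (i2.app (T12.obj X) ≫ κ12.app X)) ∧
      -- lam is the copairing of F γ1 ∘ lam1 and F γ2 ∘ lam2
      (∀ X : C, i1.app (F.obj X) ≫ lam.app X = lam1.app X ≫ F.map (γ1 X)) ∧
      (∀ X : C, i2.app (F.obj X) ≫ lam.app X = lam2.app X ≫ F.map (γ2 X)) := by
  choose γ1 hγ1 uγ1 using fun X =>
    hinit1 X (T12.obj X) (η12.app X) (i1.app (T12.obj X) ≫ κ12.app X)
  choose γ2 hγ2 uγ2 using fun X =>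
    hinit2 X (T12.obj X) (η12.app X) (i2.app (T12.obj X) ≫ κ12.app X)
  have hγ1η := fun X => (hγ1 X).1
  have hγ1κ := fun X => (hγ1 X).2
  have hγ2η := fun X => (hγ2 X).1
  have hγ2κ := fun X => (hγ2 X).2
  have nη1 : ∀ {X Y : C} (f : X ⟶ Y), f ≫ η1.app Y = η1.app X ≫ T1.map f :=
    fun f => by simpa using η1.naturality f
  have nη2 : ∀ {X Y : C} (f : X ⟶ Y), f ≫ η2.app Y = η2.app X ≫ T2.map f :=
    fun f => by simpa using η2.naturality f
  have nη12 : ∀ {X Y : C} (f : X ⟶ Y), f ≫ η12.app Y = η12.app X ≫ T12.map f :=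
    fun f => by simpa using η12.naturality f
  have nκ1 : ∀ {X Y : C} (f : X ⟶ Y),
      S1.map (T1.map f) ≫ κ1.app Y = κ1.app X ≫ T1.map f :=
    fun f => by simpa using κ1.naturality f
  have nκ2 : ∀ {X Y : C} (f : X ⟶ Y),
      S2.map (T2.map f) ≫ κ2.app Y = κ2.app X ≫ T2.map f :=
    fun f => by simpa using κ2.naturality f
  have nκ12 : ∀ {X Y : C} (f : X ⟶ Y),
      S12.map (T12.map f) ≫ κ12.app Y = κ12.app X ≫ T12.map f :=
    fun f => by simpa using κ12.naturality f
  have ni1 : ∀ {X Y : C} (f : X ⟶ Y), S1.map f ≫ i1.app Y = i1.app X ≫ S12.map f :=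
    fun f => i1.naturality f
  have ni2 : ∀ {X Y : C} (f : X ⟶ Y), S2.map f ≫ i2.app Y = i2.app X ≫ S12.map f :=
    fun f => i2.naturality f
  have nlam1 : ∀ {X Y : C} (f : X ⟶ Y),
      S1.map (F.map f) ≫ lam1.app Y = lam1.app X ≫ F.map (T1.map f) :=
    fun f => by simpa using lam1.naturality f
  have nlam2 : ∀ {X Y : C} (f : X ⟶ Y),
      S2.map (F.map f) ≫ lam2.app Y = lam2.app X ≫ F.map (T2.map f) :=
    fun f => by simpa using lam2.naturality f
  -- naturality of γ1, γ2
  have γ1nat : ∀ {X Y : C} (f : X ⟶ Y), T1.map f ≫ γ1 Y = γ1 X ≫ T12.map f := by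
    intro X Y f
    have h := hinit1 X (T12.obj Y) (f ≫ η12.app Y) (i1.app (T12.obj Y) ≫ κ12.app Y)
    refine h.unique ⟨?_, ?_⟩ ⟨?_, ?_⟩
    · rw [← Category.assoc, ← nη1 f, Category.assoc, hγ1η Y]
    · rw [← Category.assoc, ← nκ1 f, Category.assoc, hγ1κ Y, S1.map_comp, Category.assoc]
    · rw [← Category.assoc, hγ1η X, ← nη12 f]
    · rw [← Category.assoc, hγ1κ X, Category.assoc, Category.assoc, ← nκ12 f,
        ← Category.assoc (i1.app _), ← ni1 (T12.map f), S1.map_comp]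
      simp [Category.assoc]
  have γ2nat : ∀ {X Y : C} (f : X ⟶ Y), T2.map f ≫ γ2 Y = γ2 X ≫ T12.map f := by
    intro X Y f
    have h := hinit2 X (T12.obj Y) (f ≫ η12.app Y) (i2.app (T12.obj Y) ≫ κ12.app Y)
    refine h.unique ⟨?_, ?_⟩ ⟨?_, ?_⟩
    · rw [← Category.assoc, ← nη2 f, Category.assoc, hγ2η Y]
    · rw [← Category.assoc, ← nκ2 f, Category.assoc, hγ2κ Y, S2.map_comp, Category.assoc]
    · rw [← Category.assoc, hγ2η X, ← nη12 f]
    · rw [← Category.assoc, hγ2κ X, Category.assoc, Category.assoc, ← nκ12 f,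
        ← Category.assoc (i2.app _), ← ni2 (T12.map f), S2.map_comp]
      simp [Category.assoc]
  choose lamc hlam ulam using fun X =>
    hcoprod (F.obj X) (F.obj (T12.obj X)) (lam1.app X ≫ F.map (γ1 X))
      (lam2.app X ≫ F.map (γ2 X))
  have hlam1 := fun X => (hlam X).1
  have hlam2 := fun X => (hlam X).2
  refine ⟨γ1, γ2,
    { app := lamc
      naturality := ?_ }, fun X => ⟨hγ1η X, hγ1κ X⟩, fun X => ⟨hγ2η X, hγ2κ X⟩,
    hlam1, hlam2⟩
  intro X Y f
  have h := hcoprod (F.obj X) (F.obj (T12.obj Y))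
    (lam1.app X ≫ F.map (T1.map f ≫ γ1 Y)) (lam2.app X ≫ F.map (T2.map f ≫ γ2 Y))
  show S12.map (F.map f) ≫ lamc Y = lamc X ≫ F.map (T12.map f)
  refine h.unique ⟨?_, ?_⟩ ⟨?_, ?_⟩
  · rw [← Category.assoc, ← ni1 (F.map f), Category.assoc, hlam1 Y, ← Category.assoc,
      nlam1 f, Category.assoc, ← F.map_comp]
  · rw [← Category.assoc, ← ni2 (F.map f), Category.assoc, hlam2 Y, ← Category.assoc,
      nlam2 f, Category.assoc, ← F.map_comp]
  · rw [← Category.assoc, hlam1 X, Category.assoc, ← F.map_comp, γ1nat f]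
  · rw [← Category.assoc, hlam2 X, Category.assoc, ← F.map_comp, γ2nat f]
end

section
/- The copy/delete GSOS interpretation of the comonoid is incompatible with naturality in the sense of Lawvere theories: let d : 0 → 1 be a generator with exactly the transitions d ⟶^{ε/a} d and d ⟶^{ε/b} d (a ≠ b). Then under the prop derivation rules together with the black comonoid rules (δ ⟶^{k / kk} δ), the term d ⨟ δ has exactly the transitions with output labels aa and bb, while d ⊗ d additionally has transitions with output labels ab and ba; hence the transition sets of d ⨟ δ and d ⊗ d (as required equal by comonoid naturality d ⨟ δ = d ⊗ d) differ. -/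
/-- Transitions of a closed diagram of sort `(n,m)` over a label alphabet `A`:
pairs of an input word (length `n`) and an output word (length `m`).  Since the
terms involved only have self-loop transitions, we record just the label pairs. -/
abbrev Transitions (A : Type) := Set (List A × List A)

/-- Transitions of the generator `d : 0 → 1`, with exactly `d ⟶^{ε/a} d` and
`d ⟶^{ε/b} d`. -/
def Td {A : Type} (a b : A) : Transitions A := {([], [a]), ([], [b])}

/-- Transitions of the black comonoid `δ : 1 → 2`: `δ ⟶^{k/kk} δ` for every `k`. -/
def Tdelta (A : Type) : Transitions A := {p | ∃ k : A, p = ([k], [k, k])}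

/-- The sequential-composition rule on transition sets: matching middle labels. -/
def seqT {A : Type} (S T : Transitions A) : Transitions A :=
  {p | ∃ u v w, (u, v) ∈ S ∧ (v, w) ∈ T ∧ p = (u, w)}

/-- The monoidal-product rule on transition sets: componentwise concatenation. -/
def tenT {A : Type} (S T : Transitions A) : Transitions A :=
  {p | ∃ u₁ w₁ u₂ w₂, (u₁, w₁) ∈ S ∧ (u₂, w₂) ∈ T ∧ p = (u₁ ++ u₂, w₁ ++ w₂)}

/-- The copy interpretation of the comonoid is incompatible with naturality:
for a generator `d : 0 → 1` with transitions `ε/a` and `ε/b` (`a ≠ b`), the term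
`d ⨟ δ` has exactly the transitions with outputs `aa`, `bb`, while `d ⊗ d`
additionally has outputs `ab` and `ba`; hence their transition sets differ, so
comonoid naturality `d ⨟ δ = d ⊗ d` fails to be compositional. -/
theorem comonoid_naturality_fails {A : Type} (a b : A) (hab : a ≠ b) :
    seqT (Td a b) (Tdelta A) = {([], [a, a]), ([], [b, b])} ∧
    tenT (Td a b) (Td a b) =
      {([], [a, a]), ([], [a, b]), ([], [b, a]), ([], [b, b])} ∧
    seqT (Td a b) (Tdelta A) ≠ tenT (Td a b) (Td a b) := by
  have h1 : seqT (Td a b) (Tdelta A) = {([], [a, a]), ([], [b, b])} := by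
    ext p
    simp only [seqT, Td, Tdelta, Set.mem_setOf_eq, Set.mem_insert_iff, Set.mem_singleton_iff,
      Prod.mk.injEq]
    constructor
    · rintro ⟨u, v, w, (h | h) , ⟨k, hk⟩, rfl⟩ <;> simp_all [Prod.ext_iff]
    · rintro (rfl | rfl)
      · exact ⟨[], [a], [a, a], Or.inl ⟨rfl, rfl⟩, ⟨a, rfl, rfl⟩, rfl⟩
      · exact ⟨[], [b], [b, b], Or.inr ⟨rfl, rfl⟩, ⟨b, rfl, rfl⟩, rfl⟩
  have h2 : tenT (Td a b) (Td a b) =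
      {([], [a, a]), ([], [a, b]), ([], [b, a]), ([], [b, b])} := by
    ext p
    simp only [tenT, Td, Set.mem_setOf_eq, Set.mem_insert_iff, Set.mem_singleton_iff]
    constructor
    · rintro ⟨u₁, w₁, u₂, w₂, (h | h), (h' | h'), rfl⟩ <;> simp_all
    · rintro (rfl | rfl | rfl | rfl)
      · exact ⟨[], [a], [], [a], Or.inl rfl, Or.inl rfl, rfl⟩
      · exact ⟨[], [a], [], [b], Or.inl rfl, Or.inr rfl, rfl⟩
      · exact ⟨[], [b], [], [a], Or.inr rfl, Or.inl rfl, rfl⟩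
      · exact ⟨[], [b], [], [b], Or.inr rfl, Or.inr rfl, rfl⟩
  refine ⟨h1, h2, ?_⟩
  rw [h1, h2]
  intro h
  have : (([], [a, b]) : List A × List A) ∈ ({([], [a, a]), ([], [b, b])} : Transitions A) := by
    rw [h]; simp
  simp [Prod.ext_iff, hab] at this
  exact hab this.symm
end
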